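/- Let Γ be a group acting on a topological space X with compact quotient X/Γ, let φ : X → ℝ_{>0} be continuous, and let χ : Γ → ℝ_{>0} be an injective group homomorphism with φ(γ·x) = χ(γ)·φ(x) for all γ, x. If the image of χ is discrete in ℝ_{>0}, then φ is a proper map. -/

import Mathlib

/-- If `Γ` acts cocompactly on `X`, `φ` is continuous positive and equivariant via an
injective character `χ : Γ → ℝ_{>0}` with discrete image, then `φ` is proper as a map
to `ℝ_{>0}`. -/
theorem stmt3 {X : Type*} [TopologicalSpace X] [LocallyCompactSpace X] [T2Space X]
    {Γ : Type*} [Group Γ] [MulAction Γ X] [ContinuousConstSMul Γ X]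
    (hfree : ∀ (g : Γ) (x : X), g • x = x → g = 1)
    (hpd : ∀ K : Set X, IsCompact K → {g : Γ | ((g • ·) '' K ∩ K).Nonempty}.Finite)
    (hcpt : CompactSpace (Quotient (MulAction.orbitRel Γ X)))
    (φ : X → ℝ) (hφpos : ∀ x, 0 < φ x) (hφc : Continuous φ)
    (χ : Γ →* ℝˣ) (hχpos : ∀ g, (0 : ℝ) < (χ g : ℝˣ)) (hχinj : Function.Injective χ)
    (hequiv : ∀ (g : Γ) (x : X), φ (g • x) = (χ g : ℝˣ) * φ x)
    (hdisc : DiscreteTopology χ.range) :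
    ∀ K : Set ℝ, K ⊆ Set.Ioi 0 → IsCompact K → IsCompact (φ ⁻¹' K) := by
  intro K hKpos hKcpt
  rcases Set.eq_empty_or_nonempty (φ ⁻¹' K) with hpre | hpre
  · rw [hpre]; exact isCompact_empty
  obtain ⟨x₀, hx₀⟩ := hpre
  have hKne : K.Nonempty := ⟨φ x₀, hx₀⟩
  -- a compact set `C` meeting every orbit
  obtain ⟨C, hCc, hCcov⟩ : ∃ C : Set X, IsCompact C ∧ ∀ x : X, ∃ g : Γ, g • x ∈ C := by
    have hloc : ∀ x : X, ∃ U : Set X, IsCompact U ∧ U ∈ nhds x :=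
      fun x => exists_compact_mem_nhds x
    choose U hUc hUn using hloc
    let π : X → Quotient (MulAction.orbitRel Γ X) := Quotient.mk _
    have hπo : IsOpenMap π := isOpenMap_quotient_mk'_mul
    have hcover : Set.univ ⊆ ⋃ x, π '' interior (U x) := by
      intro q _
      obtain ⟨x, rfl⟩ := Quotient.exists_rep q
      exact Set.mem_iUnion.2 ⟨x, ⟨x, mem_interior_iff_mem_nhds.2 (hUn x), rfl⟩⟩
    obtain ⟨s, hs⟩ := isCompact_univ.elim_finite_subcover (fun x => π '' interior (U x))
      (fun x => hπo _ isOpen_interior) hcover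
    refine ⟨⋃ x ∈ s, U x, s.isCompact_biUnion (fun x _ => hUc x), ?_⟩
    intro x
    have hx : π x ∈ ⋃ i ∈ s, π '' interior (U i) := hs (Set.mem_univ _)
    obtain ⟨i, his, y, hy, hyx⟩ := by simpa using hx
    have hrel := Quotient.exact hyx.symm
    obtain ⟨g, (hg : g • y = x)⟩ := hrel
    have hgy : g⁻¹ • x = y := by rw [← hg, inv_smul_smul]
    exact ⟨g⁻¹, Set.mem_biUnion his (hgy ▸ interior_subset hy)⟩
  have hCne : C.Nonempty := by
    obtain ⟨g, hg⟩ := hCcov x₀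
    exact ⟨g • x₀, hg⟩
  -- bounds for K
  set a := sInf K with ha
  set b := sSup K with hb
  have haK : a ∈ K := hKcpt.sInf_mem hKne
  have hapos : 0 < a := hKpos haK
  have hKab : K ⊆ Set.Icc a b := fun x hx =>
    ⟨csInf_le hKcpt.bddBelow hx, le_csSup hKcpt.bddAbove hx⟩
  -- bounds for φ '' C
  have hDc : IsCompact (φ '' C) := hCc.image hφc
  have hDne : (φ '' C).Nonempty := hCne.image φ
  set m := sInf (φ '' C) with hm
  set M := sSup (φ '' C) with hM
  have hmD : m ∈ φ '' C := hDc.sInf_mem hDne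
  have hmpos : 0 < m := by
    obtain ⟨c, _, hc⟩ := hmD
    exact hc ▸ hφpos c
  have hDmM : φ '' C ⊆ Set.Icc m M := fun x hx =>
    ⟨csInf_le hDc.bddBelow hx, le_csSup hDc.bddAbove hx⟩
  have hMpos : 0 < M := lt_of_lt_of_le hmpos (hDmM hmD).2
  -- the finite set of relevant group elements
  set F : Set Γ := {g : Γ | ((χ g : ℝˣ) : ℝ) ∈ Set.Icc (a / M) (b / m)} with hF
  have hFfin : F.Finite := by
    -- the corresponding set of units is finite
    have hrc : IsClosed ((χ.range : Subgroup ℝˣ) : Set ℝˣ) := by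
      letI : UniformSpace ℝˣ := IsTopologicalGroup.rightUniformSpace ℝˣ
      haveI : IsUniformGroup ℝˣ := comm_topologicalGroup_is_uniform
      exact Subgroup.isClosed_of_discrete
    have hpc : IsCompact (Units.val ⁻¹' (Set.Icc (a / M) (b / m)) : Set ℝˣ) := by
      rw [Units.isEmbedding_val₀.isCompact_iff]
      have : Units.val '' (Units.val ⁻¹' (Set.Icc (a / M) (b / m)) : Set ℝˣ)
          = Set.Icc (a / M) (b / m) := by
        apply Set.Subset.antisymm (Set.image_preimage_subset _ _)
        intro x hx
        have hxpos : 0 < x := lt_of_lt_of_le (by positivity) hx.1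
        exact ⟨Units.mk0 x (ne_of_gt hxpos), hx, rfl⟩
      rw [this]
      exact isCompact_Icc
    have hTc : IsCompact (((χ.range : Subgroup ℝˣ) : Set ℝˣ) ∩
        Units.val ⁻¹' (Set.Icc (a / M) (b / m))) := hpc.inter_left hrc
    have hTd : DiscreteTopology (((χ.range : Subgroup ℝˣ) : Set ℝˣ) ∩
        Units.val ⁻¹' (Set.Icc (a / M) (b / m)) : Set ℝˣ) :=
      DiscreteTopology.of_subset hdisc Set.inter_subset_left
    have hTfin := hTc.finite (isDiscrete_iff_discreteTopology.mpr hTd)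
    have himg : χ '' F ⊆ ((χ.range : Subgroup ℝˣ) : Set ℝˣ) ∩
        Units.val ⁻¹' (Set.Icc (a / M) (b / m)) := by
      rintro _ ⟨g, hg, rfl⟩
      exact ⟨⟨g, rfl⟩, hg⟩
    exact Set.Finite.of_finite_image (hTfin.subset himg) (hχinj.injOn)
  -- the preimage is contained in a finite union of translates of `C`
  have hsub : φ ⁻¹' K ⊆ ⋃ g ∈ F, (g • ·) '' C := by
    intro x hx
    obtain ⟨g, hg⟩ := hCcov x
    have hgx : φ (g • x) = (χ g : ℝˣ) * φ x := hequiv g x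
    have hφx : φ x ∈ Set.Icc a b := hKab hx
    have hφgx : φ (g • x) ∈ Set.Icc m M := hDmM ⟨g • x, hg, rfl⟩
    have hu : (0 : ℝ) < (χ g : ℝˣ) := hχpos g
    have hinv : ((χ g⁻¹ : ℝˣ) : ℝ) = φ x / φ (g • x) := by
      rw [map_inv, hgx]
      rw [Units.val_inv_eq_inv_val]
      field_simp
      rw [div_self (ne_of_gt (hφpos x))]
    have hgF : g⁻¹ ∈ F := by
      rw [hF, Set.mem_setOf_eq, hinv]
      constructor
      · apply div_le_div₀ (le_of_lt (hφpos x)) hφx.1 (hφpos (g • x)) hφgx.2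
      · apply div_le_div₀ (le_of_lt (lt_of_lt_of_le hapos (le_trans hφx.1 hφx.2)))
          hφx.2 hmpos hφgx.1
    refine Set.mem_biUnion hgF ⟨g • x, hg, ?_⟩
    simp
  have hbig : IsCompact (⋃ g ∈ F, (g • ·) '' C) :=
    hFfin.isCompact_biUnion (fun g _ => hCc.image (continuous_const_smul g))
  exact hbig.of_isClosed_subset (hKcpt.isClosed.preimage hφc) hsub
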